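/- In the single-topic model (w ∈ {e₁,…,e_K}), suppose landmark documents l₁,…,l_M are chosen so that the K×M matrix L with columns ψ(l_j)/P(x⁽²⁾=l_j) has rank K, where ψ(l)_k = P(x⁽²⁾=l | w=e_k). Then for every document x, L^† (L^⊤ η(x)) = η(x), where η(x)_k = P(w=e_k | x⁽¹⁾=x) and L^† is the Moore–Penrose pseudo-inverse; i.e., the posterior topic distribution is exactly recoverable by a fixed linear map applied to the oracle representation g*(x, l_{1:M}) = L^⊤ η(x). -/

import Mathlib

open Finset Matrix
open scoped Classical

/-- Probability of an event under a finite probability space with density `p`. -/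
noncomputable def pr {Ω : Type*} [Fintype Ω] (p : Ω → ℝ) (s : Ω → Prop) : ℝ :=
  ∑ ω, if s ω then p ω else 0

/-- For `L` of full row rank, `(L * Lᵀ)⁻¹ * L` is the Moore–Penrose pseudo-inverse of `Lᵀ`. -/
noncomputable def pinvT {K M : ℕ} (L : Matrix (Fin K) (Fin M) ℝ) : Matrix (Fin K) (Fin M) ℝ :=
  (L * Lᵀ)⁻¹ * L

lemma pr_congr {Ω : Type*} [Fintype Ω] (p : Ω → ℝ) {s t : Ω → Prop}
    (h : ∀ ω, s ω ↔ t ω) : pr p s = pr p t := by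
  have : s = t := funext fun ω => propext (h ω)
  rw [this]

lemma pr_partition {Ω : Type*} [Fintype Ω] {K : ℕ} (p : Ω → ℝ) (W : Ω → Fin K)
    (s : Ω → Prop) :
    pr p s = ∑ k : Fin K, pr p (fun ω => s ω ∧ W ω = k) := by
  unfold pr
  rw [Finset.sum_comm]
  refine Finset.sum_congr rfl fun ω _ => ?_
  by_cases h : s ω <;> simp [h]

lemma isUnit_of_full_rank {K : ℕ} (A : Matrix (Fin K) (Fin K) ℝ) (h : A.rank = K) :
    IsUnit A := by
  rw [← Matrix.mulVec_surjective_iff_isUnit]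
  have : LinearMap.range A.mulVecLin = ⊤ := by
    apply Submodule.eq_top_of_finrank_eq
    rw [← Matrix.rank, h]
    simp
  intro v
  exact (LinearMap.range_eq_top.mp this) v

/-- Single-topic posterior recovery.  `W ∈ [K]` is the latent topic, the halves `X1, X2` are
conditionally independent given `W`, and the landmark matrix `L` has columns
`ψ(l_j)/P(X2 = l_j)` with `ψ(l)_k = P(X2 = l | W = k)`.  If `L` has rank `K`, then applying
the pseudo-inverse of `Lᵀ` to the oracle representation
`g*(x, l_{1:M}) = (P(X1=x, X2=l_j)/(P(X1=x)P(X2=l_j)))_j = Lᵀ η(x)` exactly recovers the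
posterior `η(x)_k = P(W = k | X1 = x)`. -/
theorem stmt_5 {Ω A B : Type*} [Fintype Ω] [Fintype A] [Fintype B] {K M : ℕ}
    (p : Ω → ℝ) (hp : ∀ ω, 0 ≤ p ω) (hsum : ∑ ω, p ω = 1)
    (X1 : Ω → A) (X2 : Ω → B) (W : Ω → Fin K)
    (hCI : ∀ (x : A) (x' : B) (k : Fin K),
      pr p (fun ω => X1 ω = x ∧ X2 ω = x' ∧ W ω = k) * pr p (fun ω => W ω = k) =
      pr p (fun ω => X1 ω = x ∧ W ω = k) * pr p (fun ω => X2 ω = x' ∧ W ω = k))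
    (hW : ∀ k, 0 < pr p (fun ω => W ω = k))
    (l : Fin M → B)
    (hl : ∀ j, 0 < pr p (fun ω => X2 ω = l j))
    (L : Matrix (Fin K) (Fin M) ℝ)
    (hL : ∀ k j, L k j =
      (pr p (fun ω => X2 ω = l j ∧ W ω = k) / pr p (fun ω => W ω = k)) /
        pr p (fun ω => X2 ω = l j))
    (hrank : L.rank = K)
    (x : A) (hx : 0 < pr p (fun ω => X1 ω = x)) :
    (pinvT L).mulVec
        (fun j => pr p (fun ω => X1 ω = x ∧ X2 ω = l j) /
          (pr p (fun ω => X1 ω = x) * pr p (fun ω => X2 ω = l j))) =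
      fun k => pr p (fun ω => W ω = k ∧ X1 ω = x) / pr p (fun ω => X1 ω = x) := by
  set η : Fin K → ℝ :=
    fun k => pr p (fun ω => X1 ω = x ∧ W ω = k) / pr p (fun ω => X1 ω = x) with hη
  have hxne : pr p (fun ω => X1 ω = x) ≠ 0 := hx.ne'
  -- Step 1: the oracle representation equals `Lᵀ *ᵥ η`.
  have hg : (fun j => pr p (fun ω => X1 ω = x ∧ X2 ω = l j) /
          (pr p (fun ω => X1 ω = x) * pr p (fun ω => X2 ω = l j))) = Lᵀ.mulVec η := by
    funext j
    have hlj : pr p (fun ω => X2 ω = l j) ≠ 0 := (hl j).ne'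
    have hpart : pr p (fun ω => X1 ω = x ∧ X2 ω = l j) =
        ∑ k : Fin K, pr p (fun ω => X1 ω = x ∧ X2 ω = l j ∧ W ω = k) := by
      rw [pr_partition p W (fun ω => X1 ω = x ∧ X2 ω = l j)]
      exact Finset.sum_congr rfl fun k _ => pr_congr p fun ω => and_assoc
    rw [Matrix.mulVec, hpart, Finset.sum_div]
    refine Finset.sum_congr rfl fun k _ => ?_
    have hWk : pr p (fun ω => W ω = k) ≠ 0 := (hW k).ne'
    have h2 : pr p (fun ω => X1 ω = x ∧ X2 ω = l j ∧ W ω = k) =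
        pr p (fun ω => X1 ω = x ∧ W ω = k) * pr p (fun ω => X2 ω = l j ∧ W ω = k) /
          pr p (fun ω => W ω = k) := (eq_div_iff hWk).mpr (hCI x (l j) k)
    simp only [dotProduct, Matrix.transpose_apply, hη]
    rw [h2, hL k j]
    field_simp
  rw [hg]
  -- Step 2: `pinvT L` is a left inverse of `Lᵀ`.
  have hunit : IsUnit (L * Lᵀ) :=
    isUnit_of_full_rank _ (by rw [Matrix.rank_self_mul_transpose, hrank])
  have hinv : pinvT L * Lᵀ = 1 := by
    rw [pinvT, Matrix.mul_assoc, Matrix.nonsing_inv_mul _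
      ((Matrix.isUnit_iff_isUnit_det _).mp hunit)]
  rw [Matrix.mulVec_mulVec, hinv, Matrix.one_mulVec]
  funext k
  simp only [hη]
  congr 1
  exact pr_congr p fun ω => and_comm
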